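/- For any finite graphs G and J, Υ(G ∨ J) ≤ Υ(G) + Υ(J), where G ∨ J is the join of G and J. -/

import Mathlib

open SimpleGraph

/-- The join of two graphs on disjoint vertex sets. -/
def SimpleGraph.join {V W : Type*} (G : SimpleGraph V) (J : SimpleGraph W) :
    SimpleGraph (V ⊕ W) where
  Adj x y :=
    match x, y with
    | Sum.inl a, Sum.inl b => G.Adj a b
    | Sum.inr a, Sum.inr b => J.Adj a b
    | Sum.inl _, Sum.inr _ => True
    | Sum.inr _, Sum.inl _ => True
  symm := by
    constructor
    rintro (a | a) (b | b) h
    · exact G.adj_symm h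
    · trivial
    · trivial
    · exact J.adj_symm h
  loopless := by
    constructor
    rintro (a | a) h
    · exact G.irrefl h
    · exact J.irrefl h

/-- The common neighbourhood of a set of vertices. -/
def SimpleGraph.commonNbhd {V : Type*} (G : SimpleGraph V) (S : Set V) : Set V :=
  {x | ∀ v ∈ S, G.Adj v x}

/-- A small common neighbourhood set. -/
def SimpleGraph.IsSCN {V : Type*} (G : SimpleGraph V) (S : Set V) : Prop :=
  S.Nonempty ∧ (G.commonNbhd S).ncard ≤ S.ncard

/-- `Υ(G)`: the minimum cardinality of a small common neighbourhood set. -/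
noncomputable def SimpleGraph.upsilon {V : Type*} (G : SimpleGraph V) : ℕ :=
  sInf {n | ∃ S : Set V, G.IsSCN S ∧ S.ncard = n}

lemma upsilon_set_nonempty {V : Type*} [Fintype V] [Nonempty V] (G : SimpleGraph V) :
    {n | ∃ S : Set V, G.IsSCN S ∧ S.ncard = n}.Nonempty := by
  refine ⟨(Set.univ : Set V).ncard, Set.univ, ⟨Set.univ_nonempty, ?_⟩, rfl⟩
  have : G.commonNbhd Set.univ = ∅ := by
    ext x
    simp only [SimpleGraph.commonNbhd, Set.mem_setOf_eq, Set.mem_empty_iff_false, iff_false,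
      not_forall]
    exact ⟨x, Set.mem_univ x, G.irrefl⟩
  simp [this]

theorem stmt1 {V W : Type*} [Fintype V] [Fintype W] [Nonempty V] [Nonempty W]
    (G : SimpleGraph V) (J : SimpleGraph W) :
    (G.join J).upsilon ≤ G.upsilon + J.upsilon := by
  obtain ⟨SG, ⟨hSGne, hSGle⟩, hSGcard⟩ := Nat.sInf_mem (upsilon_set_nonempty G)
  obtain ⟨SJ, ⟨hSJne, hSJle⟩, hSJcard⟩ := Nat.sInf_mem (upsilon_set_nonempty J)
  set S : Set (V ⊕ W) := Sum.inl '' SG ∪ Sum.inr '' SJ with hS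
  have hcn : (G.join J).commonNbhd S =
      Sum.inl '' (G.commonNbhd SG) ∪ Sum.inr '' (J.commonNbhd SJ) := by
    ext x
    cases x with
    | inl a =>
      simp only [SimpleGraph.commonNbhd, Set.mem_setOf_eq, hS, Set.mem_union, Set.mem_image]
      constructor
      · intro h
        refine Or.inl ⟨a, fun v hv => ?_, rfl⟩
        exact h (Sum.inl v) (Or.inl ⟨v, hv, rfl⟩)
      · rintro (⟨b, hb, hba⟩ | ⟨b, hb, hba⟩) v hv
        · cases hba
          rcases hv with ⟨s, hs, rfl⟩ | ⟨t, ht, rfl⟩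
          · exact hb s hs
          · trivial
        · cases hba
    | inr a =>
      simp only [SimpleGraph.commonNbhd, Set.mem_setOf_eq, hS, Set.mem_union, Set.mem_image]
      constructor
      · intro h
        refine Or.inr ⟨a, fun v hv => ?_, rfl⟩
        exact h (Sum.inr v) (Or.inr ⟨v, hv, rfl⟩)
      · rintro (⟨b, hb, hba⟩ | ⟨b, hb, hba⟩) v hv
        · cases hba
        · cases hba
          rcases hv with ⟨s, hs, rfl⟩ | ⟨t, ht, rfl⟩
          · trivial
          · exact hb t ht
  have hdisj : ∀ (A : Set V) (B : Set W),
      Disjoint (Sum.inl '' A : Set (V ⊕ W)) (Sum.inr '' B) := by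
    intro A B
    rw [Set.disjoint_iff_forall_ne]
    rintro x ⟨a, _, rfl⟩ y ⟨b, _, rfl⟩
    simp
  have hcard : ∀ (A : Set V) (B : Set W),
      ((Sum.inl '' A : Set (V ⊕ W)) ∪ Sum.inr '' B).ncard = A.ncard + B.ncard := by
    intro A B
    rw [Set.ncard_union_eq (hdisj A B) (Set.toFinite _) (Set.toFinite _),
      Set.ncard_image_of_injective _ Sum.inl_injective,
      Set.ncard_image_of_injective _ Sum.inr_injective]
  have hSCN : (G.join J).IsSCN S := by
    constructor
    · obtain ⟨a, ha⟩ := hSGne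
      exact ⟨Sum.inl a, Or.inl ⟨a, ha, rfl⟩⟩
    · rw [hcn, hS, hcard, hcard]
      omega
  have : (G.join J).upsilon ≤ S.ncard := Nat.sInf_le ⟨S, hSCN, rfl⟩
  rw [hS, hcard, hSGcard, hSJcard] at this
  exact this
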